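/- The Euclidean projection onto the shifted second order cone K_α(c) is given by the piecewise formula: P(z) = z if ‖z₁‖ ≤ α(z₀ - c); P(z) = (c, 0) if ‖z₁‖ ≤ -α(z₀ - c); and P(z) = (τα + c, τ z₁/‖z₁‖) otherwise, where τ = (α(z₀ - c) + ‖z₁‖)/2. -/
import Mathlib


def shiftedSOC (d : ℕ) (α c : ℝ) : Set (ℝ × EuclideanSpace ℝ (Fin d)) :=
  {z | ‖z.2‖ ≤ α * (z.1 - c)}

def setD (d : ℕ) (zub zlb : ℝ) : Set (ℝ × EuclideanSpace ℝ (Fin d)) :=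
  shiftedSOC d (-1) zub ∩ shiftedSOC d 1 zlb

/-- Squared Euclidean distance on `ℝ × ℝ^{n-1}`. -/
noncomputable def sqDist {d : ℕ} (a b : ℝ × EuclideanSpace ℝ (Fin d)) : ℝ :=
  (a.1 - b.1) ^ 2 + ‖a.2 - b.2‖ ^ 2

/-- `v` is the Euclidean projection of `z` onto `C`. -/
def IsProj {d : ℕ} (C : Set (ℝ × EuclideanSpace ℝ (Fin d)))
    (z v : ℝ × EuclideanSpace ℝ (Fin d)) : Prop :=
  v ∈ C ∧ ∀ w ∈ C, sqDist v z ≤ sqDist w z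
lemma key2 (t u s r : ℝ) (hs : 0 ≤ s) (hr : 0 ≤ r) (hsu : s ≤ u) (htr : t ≤ -r) :
    t ^ 2 + r ^ 2 ≤ (u - t) ^ 2 + (s - r) ^ 2 := by
  nlinarith [mul_nonneg (hs.trans hsu) (by linarith : (0:ℝ) ≤ -t - r),
    mul_nonneg (by linarith : (0:ℝ) ≤ u - s) hr, sq_nonneg s, sq_nonneg u]

lemma key3 (t u s r : ℝ) (hsu : s ≤ u) (htr : t ≤ r) :
    ((t + r) / 2 - t) ^ 2 + ((t + r) / 2 - r) ^ 2 ≤ (u - t) ^ 2 + (s - r) ^ 2 := by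
  nlinarith [sq_nonneg (u - t - r + s), sq_nonneg (u - s),
    mul_nonneg (by linarith : (0:ℝ) ≤ u - s) (by linarith : (0:ℝ) ≤ r - t)]

lemma normsq_bound {d : ℕ} (a b : EuclideanSpace ℝ (Fin d)) :
    (‖a‖ - ‖b‖) ^ 2 ≤ ‖a - b‖ ^ 2 := by
  have h := abs_norm_sub_norm_le a b
  have h0 := abs_nonneg (‖a‖ - ‖b‖)
  nlinarith [sq_abs (‖a‖ - ‖b‖)]

theorem proj_shiftedSOC_formula (d : ℕ) (α c : ℝ) (hα : α = 1 ∨ α = -1)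
    (z₀ : ℝ) (z₁ : EuclideanSpace ℝ (Fin d)) :
    (‖z₁‖ ≤ α * (z₀ - c) → IsProj (shiftedSOC d α c) (z₀, z₁) (z₀, z₁)) ∧
    (‖z₁‖ ≤ -α * (z₀ - c) →
      IsProj (shiftedSOC d α c) (z₀, z₁) (c, (0 : EuclideanSpace ℝ (Fin d)))) ∧
    (α * (z₀ - c) < ‖z₁‖ → -α * (z₀ - c) < ‖z₁‖ →
      IsProj (shiftedSOC d α c) (z₀, z₁)
        ((α * (z₀ - c) + ‖z₁‖) / 2 * α + c,
          ((α * (z₀ - c) + ‖z₁‖) / 2 / ‖z₁‖) • z₁)) := by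
  have hα2 : α ^ 2 = 1 := by rcases hα with rfl | rfl <;> norm_num
  refine ⟨?_, ?_, ?_⟩
  · intro h
    refine ⟨h, fun w hw => ?_⟩
    simp only [sqDist, sub_self, norm_zero]
    norm_num
    positivity
  · intro h
    constructor
    · show ‖(0 : EuclideanSpace ℝ (Fin d))‖ ≤ α * (c - c)
      simp
    · intro w hw
      have hw' : ‖w.2‖ ≤ α * (w.1 - c) := hw
      have hsr := normsq_bound w.2 z₁
      have hkey := key2 (α * (z₀ - c)) (α * (w.1 - c)) ‖w.2‖ ‖z₁‖
        (norm_nonneg _) (norm_nonneg _) hw' (by linarith)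
      have e1 : (α * (w.1 - c) - α * (z₀ - c)) ^ 2 = (w.1 - z₀) ^ 2 := by
        linear_combination (w.1 - z₀) ^ 2 * hα2
      have e2 : (α * (z₀ - c)) ^ 2 = (c - z₀) ^ 2 := by
        linear_combination (c - z₀) ^ 2 * hα2
      simp only [sqDist, zero_sub, norm_neg]
      nlinarith [hkey, hsr, e1, e2]
  · intro h1 h2
    set r := ‖z₁‖ with hr
    set t := α * (z₀ - c) with ht
    have hrpos : 0 < r := by
      rcases le_or_gt t 0 with h | h <;> linarith
    set τ := (t + r) / 2 with hτ
    have hτpos : 0 < τ := by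
      simp only [hτ]; linarith
    have hvnorm : ‖((τ / r) • z₁ : EuclideanSpace ℝ (Fin d))‖ = τ := by
      rw [norm_smul, Real.norm_eq_abs, abs_of_pos (div_pos hτpos hrpos), ← hr]
      field_simp
    constructor
    · show ‖((τ / r) • z₁ : EuclideanSpace ℝ (Fin d))‖ ≤ α * (τ * α + c - c)
      rw [hvnorm]
      have : α * (τ * α + c - c) = τ * α ^ 2 := by ring
      rw [this, hα2, mul_one]
    · intro w hw
      have hw' : ‖w.2‖ ≤ α * (w.1 - c) := hw
      have hsr := normsq_bound w.2 z₁
      have hkey := key3 t (α * (w.1 - c)) ‖w.2‖ r hw' (le_of_lt h1)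
      have e1 : (α * (w.1 - c) - t) ^ 2 = (w.1 - z₀) ^ 2 := by
        simp only [ht]; linear_combination (w.1 - z₀) ^ 2 * hα2
      have e3 : (τ * α + c - z₀) ^ 2 = (τ - t) ^ 2 := by
        simp only [ht]; linear_combination (τ - (z₀ - c)) * (τ + z₀ - c) * hα2
      have e4 : ‖((τ / r) • z₁ - z₁ : EuclideanSpace ℝ (Fin d))‖ ^ 2 = (τ - r) ^ 2 := by
        have : ((τ / r) • z₁ - z₁ : EuclideanSpace ℝ (Fin d)) = (τ / r - 1) • z₁ := by
          rw [sub_smul, one_smul]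
        rw [this, norm_smul, Real.norm_eq_abs, mul_pow, sq_abs, ← hr]
        field_simp
      simp only [sqDist]
      rw [e3, e4]
      nlinarith [hkey, hsr, e1]
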